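/- Let (A,∘) be a pre-Lie algebra over a field of characteristic zero and (l,r,V) a module with V finite-dimensional. Let T : V → A be a linear map, identified with the element Σᵢ T(vᵢ)⊗vᵢ* of (A⊕V*)⊗(A⊕V*) for a basis {vᵢ} of V with dual basis {vᵢ*}. Then r = T + σ(T) is a symmetric solution of the S-equation in the semidirect product pre-Lie algebra A ⋉_{l*−r*, −r*} V* if and only if T is an O-operator of (A,∘) associated to (l,r,V). -/

import Mathlib

set_option maxSynthPendingDepth 3
set_option synthInstance.maxHeartbeats 400000
set_option maxHeartbeats 1000000

open TensorProduct

/-- A pre-Lie algebra structure. -/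
def IsPreLie {K A : Type*} [Field K] [AddCommGroup A] [Module K A]
    (mul : A →ₗ[K] A →ₗ[K] A) : Prop :=
  ∀ x y z : A, mul (mul x y) z - mul x (mul y z) = mul (mul y x) z - mul y (mul x z)

/-- A module `(l,r,V)` of a pre-Lie algebra `(A,∘)`. -/
def IsPreLieModule {K A V : Type*} [Field K] [AddCommGroup A] [Module K A]
    [AddCommGroup V] [Module K V]
    (mul : A →ₗ[K] A →ₗ[K] A) (l r : A →ₗ[K] Module.End K V) : Prop :=
  (∀ x y : A, l x * l y - l (mul x y) = l y * l x - l (mul y x)) ∧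
  (∀ x y : A, l x * r y - r y * l x = r (mul x y) - r y * r x)

/-- An O-operator of a pre-Lie algebra `(A,∘)` associated to a module `(l,r,V)`. -/
def IsOOperator {K A V : Type*} [Field K] [AddCommGroup A] [Module K A]
    [AddCommGroup V] [Module K V]
    (mul : A →ₗ[K] A →ₗ[K] A) (l r : A →ₗ[K] Module.End K V) (T : V →ₗ[K] A) : Prop :=
  ∀ u v : V, mul (T u) (T v) = T (l (T u) v + r (T v) u)

/-- The dual map `ρ* : A → gl(V*)` defined by `⟨ρ*(x)v*, u⟩ = −⟨v*, ρ(x)u⟩`. -/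
noncomputable def dualRep {K A V : Type*} [Field K] [AddCommGroup A] [Module K A]
    [AddCommGroup V] [Module K V]
    (ρ : A →ₗ[K] Module.End K V) : A →ₗ[K] Module.End K (Module.Dual K V) :=
  -((Module.Dual.transpose (R := K) (M := V) (M' := V)) ∘ₗ ρ)

/-- The semidirect product pre-Lie algebra `A ⋉_{l*−r*, −r*} V*` on `A ⊕ V*`:
`(x+u)∗(y+v) = x∘y + (l*−r*)(x)v + (−r*)(y)u`. -/
noncomputable def semidirectMul {K A V : Type*} [Field K] [AddCommGroup A] [Module K A]
    [AddCommGroup V] [Module K V]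
    (mul : A →ₗ[K] A →ₗ[K] A) (l r : A →ₗ[K] Module.End K V) :
    (A × Module.Dual K V) →ₗ[K] (A × Module.Dual K V) →ₗ[K] (A × Module.Dual K V) :=
  LinearMap.mk₂ K
    (fun p q => (mul p.1 q.1,
      (dualRep l - dualRep r) p.1 q.2 + (-(dualRep r)) q.1 p.2))
    (by intros m m' n; simp [Prod.ext_iff]; abel)
    (by intros c m n; simp [Prod.ext_iff])
    (by intros m n n'; simp [Prod.ext_iff]; abel)
    (by intros c m n; simp [Prod.ext_iff])

/-- The element of `(A ⊕ V*) ⊗ (A ⊕ V*)` corresponding to a linear map `T : V → A`,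
i.e. `Σᵢ T(vᵢ) ⊗ vᵢ*` for a basis `{vᵢ}` of `V` with dual basis `{vᵢ*}`. -/
noncomputable def elemOfMap {K A V : Type*} [Field K] [AddCommGroup A] [Module K A]
    [AddCommGroup V] [Module K V] [FiniteDimensional K V]
    (T : V →ₗ[K] A) : (A × Module.Dual K V) ⊗[K] (A × Module.Dual K V) :=
  TensorProduct.map (LinearMap.inl K A (Module.Dual K V)) (LinearMap.inr K A (Module.Dual K V))
    ((TensorProduct.comm K (Module.Dual K V) A) ((dualTensorHomEquiv K V A).symm T))

/-- `r₁₂ ∗ r₁₃`: on pure tensors, `(a⊗b, c⊗d) ↦ (a∗c) ⊗ b ⊗ d`. -/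
noncomputable def sTerm12_13 {K A : Type*} [Field K] [AddCommGroup A] [Module K A]
    (mul : A →ₗ[K] A →ₗ[K] A) (r s : A ⊗[K] A) : A ⊗[K] (A ⊗[K] A) :=
  (TensorProduct.map (TensorProduct.lift mul) LinearMap.id)
    ((TensorProduct.tensorTensorTensorComm K A A A A) (r ⊗ₜ[K] s))

/-- `r₁₂ ∗ r₂₃`: on pure tensors, `(a⊗b, c⊗d) ↦ a ⊗ (b∗c) ⊗ d`. -/
noncomputable def sTerm12_23 {K A : Type*} [Field K] [AddCommGroup A] [Module K A]
    (mul : A →ₗ[K] A →ₗ[K] A) (r s : A ⊗[K] A) : A ⊗[K] (A ⊗[K] A) :=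
  (TensorProduct.map LinearMap.id
      ((TensorProduct.map (TensorProduct.lift mul) LinearMap.id) ∘ₗ
        (TensorProduct.assoc K A A A).symm.toLinearMap))
    ((TensorProduct.assoc K A A (A ⊗[K] A)) (r ⊗ₜ[K] s))

/-- `[r₁₃, r₂₃]`: on pure tensors, `(a⊗b, c⊗d) ↦ a ⊗ c ⊗ (b∗d − d∗b)`. -/
noncomputable def sTermBr13_23 {K A : Type*} [Field K] [AddCommGroup A] [Module K A]
    (mul : A →ₗ[K] A →ₗ[K] A) (r s : A ⊗[K] A) : A ⊗[K] (A ⊗[K] A) :=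
  (TensorProduct.map LinearMap.id
      (TensorProduct.map LinearMap.id (TensorProduct.lift (mul - mul.flip))))
    ((TensorProduct.assoc K A A (A ⊗[K] A))
      ((TensorProduct.tensorTensorTensorComm K A A A A) (r ⊗ₜ[K] s)))

/-- The S-equation in a pre-Lie algebra: `−r₁₂∗r₁₃ + r₁₂∗r₂₃ + [r₁₃,r₂₃] = 0`. -/
def IsSEquationSolution {K A : Type*} [Field K] [AddCommGroup A] [Module K A]
    (mul : A →ₗ[K] A →ₗ[K] A) (r : A ⊗[K] A) : Prop :=
  -sTerm12_13 mul r r + sTerm12_23 mul r r + sTermBr13_23 mul r r = 0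

section Aux
variable {K A V : Type*} [Field K] [AddCommGroup A] [Module K A]
    [AddCommGroup V] [Module K V]

lemma semidirectMul_apply (mul : A →ₗ[K] A →ₗ[K] A) (l r : A →ₗ[K] Module.End K V)
    (p q : A × Module.Dual K V) :
    semidirectMul mul l r p q = (mul p.1 q.1,
      (dualRep l - dualRep r) p.1 q.2 + (-(dualRep r)) q.1 p.2) := rfl

lemma dualRep_apply (ρ : A →ₗ[K] Module.End K V) (x : A) (g : Module.Dual K V) :
    dualRep ρ x g = -(g ∘ₗ ρ x) := rfl

lemma elemOfMap_eq [FiniteDimensional K V] {ι : Type*} [Fintype ι] (b : Module.Basis ι K V)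
    (T : V →ₗ[K] A) :
    elemOfMap (K := K) T =
      ∑ i, ((T (b i), 0) : A × Module.Dual K V) ⊗ₜ[K] ((0, b.coord i) : A × Module.Dual K V) := by
  have h : (dualTensorHomEquiv K V A).symm T = ∑ i, (b.coord i) ⊗ₜ[K] (T (b i)) := by
    rw [LinearEquiv.symm_apply_eq]
    apply b.ext
    intro j
    simp [dualTensorHomEquiv, map_sum, dualTensorHom_apply, Module.Basis.coord_apply,
      Module.Basis.repr_self, Finsupp.single_apply]
    rw [Finset.sum_eq_single j] <;> simp +contextual [eq_comm]
  simp only [elemOfMap, h, map_sum, TensorProduct.comm_tmul, TensorProduct.map_tmul]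
  rfl
end Aux

section Aux2
variable {K A : Type*} [Field K] [AddCommGroup A] [Module K A]

lemma sTerm12_13_tmul (mul : A →ₗ[K] A →ₗ[K] A) (a b c d : A) :
    sTerm12_13 mul (a ⊗ₜ[K] b) (c ⊗ₜ[K] d) = (mul a c) ⊗ₜ[K] (b ⊗ₜ[K] d) := by
  simp [sTerm12_13]

lemma sTerm12_23_tmul (mul : A →ₗ[K] A →ₗ[K] A) (a b c d : A) :
    sTerm12_23 mul (a ⊗ₜ[K] b) (c ⊗ₜ[K] d) = a ⊗ₜ[K] ((mul b c) ⊗ₜ[K] d) := by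
  simp [sTerm12_23]

lemma sTermBr13_23_tmul (mul : A →ₗ[K] A →ₗ[K] A) (a b c d : A) :
    sTermBr13_23 mul (a ⊗ₜ[K] b) (c ⊗ₜ[K] d) = a ⊗ₜ[K] (c ⊗ₜ[K] (mul b d - mul d b)) := by
  simp [sTermBr13_23, TensorProduct.sub_tmul, TensorProduct.tmul_sub]

lemma sTerm12_13_sum (mul : A →ₗ[K] A →ₗ[K] A) {ι κ : Type*} (s : Finset ι) (t : Finset κ)
    (x : ι → A ⊗[K] A) (y : κ → A ⊗[K] A) :
    sTerm12_13 mul (∑ i ∈ s, x i) (∑ j ∈ t, y j) =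
      ∑ i ∈ s, ∑ j ∈ t, sTerm12_13 mul (x i) (y j) := by
  simp [sTerm12_13, TensorProduct.sum_tmul, TensorProduct.tmul_sum, map_sum]
  exact Finset.sum_comm

lemma sTerm12_23_sum (mul : A →ₗ[K] A →ₗ[K] A) {ι κ : Type*} (s : Finset ι) (t : Finset κ)
    (x : ι → A ⊗[K] A) (y : κ → A ⊗[K] A) :
    sTerm12_23 mul (∑ i ∈ s, x i) (∑ j ∈ t, y j) =
      ∑ i ∈ s, ∑ j ∈ t, sTerm12_23 mul (x i) (y j) := by
  simp [sTerm12_23, TensorProduct.sum_tmul, TensorProduct.tmul_sum, map_sum]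
  exact Finset.sum_comm

lemma sTermBr13_23_sum (mul : A →ₗ[K] A →ₗ[K] A) {ι κ : Type*} (s : Finset ι) (t : Finset κ)
    (x : ι → A ⊗[K] A) (y : κ → A ⊗[K] A) :
    sTermBr13_23 mul (∑ i ∈ s, x i) (∑ j ∈ t, y j) =
      ∑ i ∈ s, ∑ j ∈ t, sTermBr13_23 mul (x i) (y j) := by
  simp [sTermBr13_23, TensorProduct.sum_tmul, TensorProduct.tmul_sum, map_sum]
  exact Finset.sum_comm

end Aux2

section Aux3
variable {K A V M : Type*} [Field K] [AddCommGroup A] [Module K A]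
    [AddCommGroup V] [Module K V] [AddCommGroup M] [Module K M]

/-- Key reindexing lemma. -/
lemma key_reindex {ι : Type*} [Fintype ι] [DecidableEq ι] (b : Module.Basis ι K V)
    (T : V →ₗ[K] A) (g : Module.End K V) (Φ : A →ₗ[K] Module.Dual K V →ₗ[K] M) :
    ∑ i, Φ (T (b i)) ((b.coord i) ∘ₗ g) = ∑ k, Φ (T (g (b k))) (b.coord k) := by
  have hexp : ∀ i : ι, (b.coord i) ∘ₗ g = ∑ k, ((b.coord i) (g (b k))) • b.coord k := by
    intro i
    have := b.dualBasis.sum_repr ((b.coord i) ∘ₗ g)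
    simp only [Module.Basis.dualBasis_repr, Module.Basis.coe_dualBasis] at this
    exact this.symm
  calc ∑ i, Φ (T (b i)) ((b.coord i) ∘ₗ g)
      = ∑ i, ∑ k, ((b.coord i) (g (b k))) • Φ (T (b i)) (b.coord k) := by
        simp [hexp, map_sum, map_smul]
    _ = ∑ k, ∑ i, ((b.coord i) (g (b k))) • Φ (T (b i)) (b.coord k) := Finset.sum_comm
    _ = ∑ k, Φ (T (g (b k))) (b.coord k) := by
        refine Finset.sum_congr rfl fun k _ => ?_
        have hg : ∑ i, (b.coord i) (g (b k)) • b i = g (b k) := by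
          calc ∑ i, (b.coord i) (g (b k)) • b i
              = ∑ i, (b.repr (g (b k))) i • b i := by simp [Module.Basis.coord_apply]
            _ = g (b k) := b.sum_repr _
        conv_rhs => rw [← hg]
        simp only [map_sum, map_smul, LinearMap.sum_apply, LinearMap.smul_apply]
end Aux3

set_option linter.unusedSectionVars false
section Aux4
variable {K A V : Type*} [Field K] [AddCommGroup A] [Module K A]
    [AddCommGroup V] [Module K V]

local notation "E" => (A × Module.Dual K V)

lemma pairA_add (x y : A) : ((x + y, 0) : E) = (x, 0) + (y, 0) := by simp
lemma pairA_sub (x y : A) : ((x - y, 0) : E) = (x, 0) - (y, 0) := by simp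
lemma pairA_smul (c : K) (x : A) : ((c • x, 0) : E) = c • ((x, 0) : E) := by simp
lemma pairF_add (φ ψ : Module.Dual K V) : ((0, φ + ψ) : E) = (0, φ) + (0, ψ) := by simp
lemma pairF_sub (φ ψ : Module.Dual K V) : ((0, φ - ψ) : E) = (0, φ) - (0, ψ) := by simp
lemma pairF_neg (ψ : Module.Dual K V) : ((0, -ψ) : E) = -((0, ψ) : E) := by simp
lemma pairA_neg (x : A) : ((-x, 0) : E) = -((x, 0) : E) := by simp
lemma pairF_smul (c : K) (φ : Module.Dual K V) : ((0, c • φ) : E) = c • ((0, φ) : E) := by simp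

/-- placement maps -/
noncomputable def Φ1 (e : E) : A →ₗ[K] Module.Dual K V →ₗ[K] (E ⊗[K] (E ⊗[K] E)) :=
  ((TensorProduct.mk K E (E ⊗[K] E)) ∘ₗ LinearMap.inl K A (Module.Dual K V)).compl₂
    ((TensorProduct.mk K E E).flip e ∘ₗ LinearMap.inr K A (Module.Dual K V))

noncomputable def Φ2 (e : E) : A →ₗ[K] Module.Dual K V →ₗ[K] (E ⊗[K] (E ⊗[K] E)) :=
  (((TensorProduct.mk K E (E ⊗[K] E)) ∘ₗ LinearMap.inr K A (Module.Dual K V)).compl₂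
    ((TensorProduct.mk K E E).flip e ∘ₗ LinearMap.inl K A (Module.Dual K V))).flip

noncomputable def Φ3 (e : E) : A →ₗ[K] Module.Dual K V →ₗ[K] (E ⊗[K] (E ⊗[K] E)) :=
  (((TensorProduct.mk K E (E ⊗[K] E)) ∘ₗ LinearMap.inr K A (Module.Dual K V)).compl₂
    ((TensorProduct.mk K E E) e ∘ₗ LinearMap.inl K A (Module.Dual K V))).flip

noncomputable def Φ4 (e : E) : A →ₗ[K] Module.Dual K V →ₗ[K] (E ⊗[K] (E ⊗[K] E)) :=
  ((((TensorProduct.mk K E E) ∘ₗ LinearMap.inr K A (Module.Dual K V)).compl₂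
      (LinearMap.inl K A (Module.Dual K V))).compr₂ ((TensorProduct.mk K E (E ⊗[K] E)) e)).flip

noncomputable def Φ5 (e : E) : A →ₗ[K] Module.Dual K V →ₗ[K] (E ⊗[K] (E ⊗[K] E)) :=
  (((TensorProduct.mk K E E) ∘ₗ LinearMap.inl K A (Module.Dual K V)).compl₂
      (LinearMap.inr K A (Module.Dual K V))).compr₂ ((TensorProduct.mk K E (E ⊗[K] E)) e)

noncomputable def Φ6 (e : E) : A →ₗ[K] Module.Dual K V →ₗ[K] (E ⊗[K] (E ⊗[K] E)) :=
  ((TensorProduct.mk K E (E ⊗[K] E)) ∘ₗ LinearMap.inl K A (Module.Dual K V)).compl₂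
    ((TensorProduct.mk K E E) e ∘ₗ LinearMap.inr K A (Module.Dual K V))


@[simp] lemma Φ1_apply (e : E) (x φ) : Φ1 (K := K) e x φ = ((x, 0) : E) ⊗ₜ[K] (((0, φ) : E) ⊗ₜ[K] e) := rfl
@[simp] lemma Φ2_apply (e : E) (x φ) : Φ2 (K := K) e x φ = ((0, φ) : E) ⊗ₜ[K] (((x, 0) : E) ⊗ₜ[K] e) := rfl
@[simp] lemma Φ3_apply (e : E) (x φ) : Φ3 (K := K) e x φ = ((0, φ) : E) ⊗ₜ[K] (e ⊗ₜ[K] ((x, 0) : E)) := rfl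
@[simp] lemma Φ4_apply (e : E) (x φ) : Φ4 (K := K) e x φ = e ⊗ₜ[K] (((0, φ) : E) ⊗ₜ[K] ((x, 0) : E)) := rfl
@[simp] lemma Φ5_apply (e : E) (x φ) : Φ5 (K := K) e x φ = e ⊗ₜ[K] (((x, 0) : E) ⊗ₜ[K] ((0, φ) : E)) := rfl
@[simp] lemma Φ6_apply (e : E) (x φ) : Φ6 (K := K) e x φ = ((x, 0) : E) ⊗ₜ[K] (e ⊗ₜ[K] ((0, φ) : E)) := rfl

/-- extraction map -/
noncomputable def extMap (u w : V) : (E ⊗[K] (E ⊗[K] E)) →ₗ[K] A :=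
  (TensorProduct.lid K A).toLinearMap ∘ₗ
    TensorProduct.map ((Module.Dual.eval K V u) ∘ₗ LinearMap.snd K A (Module.Dual K V))
      ((TensorProduct.rid K A).toLinearMap ∘ₗ
        TensorProduct.map (LinearMap.fst K A (Module.Dual K V))
          ((Module.Dual.eval K V w) ∘ₗ LinearMap.snd K A (Module.Dual K V)))

@[simp] lemma extMap_tmul (u w : V) (p q s : E) :
    extMap (K := K) u w (p ⊗ₜ[K] (q ⊗ₜ[K] s)) = p.2 u • s.2 w • q.1 := by
  simp [extMap, TensorProduct.map_tmul, TensorProduct.lid_tmul, TensorProduct.rid_tmul, smul_comm (p.2 u)]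

end Aux4

section Main
variable {K A V : Type*} [Field K] [AddCommGroup A] [Module K A]
    [AddCommGroup V] [Module K V]

local notation "E" => (A × Module.Dual K V)

lemma mu_AA (mul : A →ₗ[K] A →ₗ[K] A) (l r : A →ₗ[K] Module.End K V) (x y : A) :
    semidirectMul mul l r ((x, 0) : E) ((y, 0) : E) = ((mul x y, 0) : E) := by
  simp [semidirectMul_apply, dualRep_apply, Prod.ext_iff]

lemma mu_AF (mul : A →ₗ[K] A →ₗ[K] A) (l r : A →ₗ[K] Module.End K V) (x : A)
    (φ : Module.Dual K V) :
    semidirectMul mul l r ((x, 0) : E) ((0, φ) : E) =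
      ((0, φ ∘ₗ r x - φ ∘ₗ l x) : E) := by
  simp [semidirectMul_apply, dualRep_apply, Prod.ext_iff]
  abel

lemma mu_FA (mul : A →ₗ[K] A →ₗ[K] A) (l r : A →ₗ[K] Module.End K V) (y : A)
    (φ : Module.Dual K V) :
    semidirectMul mul l r ((0, φ) : E) ((y, 0) : E) = ((0, φ ∘ₗ r y) : E) := by
  simp [semidirectMul_apply, dualRep_apply, Prod.ext_iff]

lemma mu_FF (mul : A →ₗ[K] A →ₗ[K] A) (l r : A →ₗ[K] Module.End K V)
    (φ ψ : Module.Dual K V) :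
    semidirectMul mul l r ((0, φ) : E) ((0, ψ) : E) = 0 := by
  simp [semidirectMul_apply, dualRep_apply, Prod.ext_iff]

lemma sTerm12_13_add (mul : A →ₗ[K] A →ₗ[K] A) (x y z w : A ⊗[K] A) :
    sTerm12_13 mul (x + y) (z + w) = sTerm12_13 mul x z + sTerm12_13 mul x w
      + sTerm12_13 mul y z + sTerm12_13 mul y w := by
  simp [sTerm12_13, TensorProduct.add_tmul, TensorProduct.tmul_add, map_add]
  abel

lemma sTerm12_23_add (mul : A →ₗ[K] A →ₗ[K] A) (x y z w : A ⊗[K] A) :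
    sTerm12_23 mul (x + y) (z + w) = sTerm12_23 mul x z + sTerm12_23 mul x w
      + sTerm12_23 mul y z + sTerm12_23 mul y w := by
  simp [sTerm12_23, TensorProduct.add_tmul, TensorProduct.tmul_add, map_add]
  abel

lemma sTermBr13_23_add (mul : A →ₗ[K] A →ₗ[K] A) (x y z w : A ⊗[K] A) :
    sTermBr13_23 mul (x + y) (z + w) = sTermBr13_23 mul x z + sTermBr13_23 mul x w
      + sTermBr13_23 mul y z + sTermBr13_23 mul y w := by
  simp [sTermBr13_23, TensorProduct.add_tmul, TensorProduct.tmul_add, map_add]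
  abel

/-- the bilinear defect map -/
noncomputable def Dmap (mul : A →ₗ[K] A →ₗ[K] A) (l r : A →ₗ[K] Module.End K V)
    (T : V →ₗ[K] A) : V →ₗ[K] V →ₗ[K] A :=
  (mul ∘ₗ T).compl₂ T - ((l ∘ₗ T : V →ₗ[K] Module.End K V) : V →ₗ[K] V →ₗ[K] V).compr₂ T
    - (((r ∘ₗ T : V →ₗ[K] Module.End K V) : V →ₗ[K] V →ₗ[K] V).compr₂ T).flip

@[simp] lemma Dmap_apply (mul : A →ₗ[K] A →ₗ[K] A) (l r : A →ₗ[K] Module.End K V)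
    (T : V →ₗ[K] A) (u v : V) :
    Dmap mul l r T u v = mul (T u) (T v) - T (l (T u) v) - T (r (T v) u) := rfl

end Main

section Main2
variable {K A V : Type*} [Field K] [AddCommGroup A] [Module K A]
    [AddCommGroup V] [Module K V] [FiniteDimensional K V]

local notation "E" => (A × Module.Dual K V)

lemma sEq_iff_OOp {ι : Type*} [Fintype ι] [DecidableEq ι] (b : Module.Basis ι K V)
    (mul : A →ₗ[K] A →ₗ[K] A) (l r : A →ₗ[K] Module.End K V) (T : V →ₗ[K] A) :
    IsSEquationSolution (semidirectMul mul l r)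
      (elemOfMap (K := K) T + (TensorProduct.comm K E E) (elemOfMap (K := K) T)) ↔
    IsOOperator mul l r T := by
  classical
  set μ := semidirectMul mul l r with hμdef
  set X := elemOfMap (K := K) T with hXdef
  have hX : X = ∑ i, ((T (b i), 0) : E) ⊗ₜ[K] ((0, b.coord i) : E) := elemOfMap_eq b T
  have hcX : (TensorProduct.comm K E E) X
      = ∑ i, ((0, b.coord i) : E) ⊗ₜ[K] ((T (b i), 0) : E) := by
    rw [hX, map_sum]; simp [TensorProduct.comm_tmul]
  have hMain : -sTerm12_13 μ (X + (TensorProduct.comm K E E) X) (X + (TensorProduct.comm K E E) X)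
      + sTerm12_23 μ (X + (TensorProduct.comm K E E) X) (X + (TensorProduct.comm K E E) X)
      + sTermBr13_23 μ (X + (TensorProduct.comm K E E) X) (X + (TensorProduct.comm K E E) X)
      = ∑ j, ∑ k,
        (-(((Dmap mul l r T (b j) (b k), 0) : E) ⊗ₜ[K] (((0, b.coord j) : E) ⊗ₜ[K] ((0, b.coord k) : E)))
          + ((0, b.coord j) : E) ⊗ₜ[K] (((Dmap mul l r T (b j) (b k), 0) : E) ⊗ₜ[K] ((0, b.coord k) : E))
          + ((0, b.coord j) : E) ⊗ₜ[K] (((0, b.coord k) : E) ⊗ₜ[K]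
              ((Dmap mul l r T (b j) (b k) - Dmap mul l r T (b k) (b j), 0) : E))) := by
    rw [sTerm12_13_add, sTerm12_23_add, sTermBr13_23_add, hcX, hX]
    simp only [sTerm12_13_sum, sTerm12_23_sum, sTermBr13_23_sum]
    simp only [hμdef, sTerm12_13_tmul, sTerm12_23_tmul, sTermBr13_23_tmul, mu_AA, mu_AF, mu_FA, mu_FF,
      TensorProduct.zero_tmul, TensorProduct.tmul_zero, Finset.sum_const_zero, add_zero, zero_add,
      Prod.mk_sub_mk, sub_zero, zero_sub, sub_self, sub_sub_cancel, sub_sub_cancel_left]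
    simp only [Dmap_apply, pairF_sub, pairA_sub, pairF_neg, pairA_neg, TensorProduct.sub_tmul,
      TensorProduct.tmul_sub, TensorProduct.neg_tmul, TensorProduct.tmul_neg,
      Finset.sum_sub_distrib, Finset.sum_add_distrib, neg_sub, neg_neg, neg_add, Finset.sum_neg_distrib]
    have hL2l : (∑ x : ι, ∑ x_1 : ι, ((0, b.coord x_1 ∘ₗ l (T (b x))) : E) ⊗ₜ[K] (((0, b.coord x) : E) ⊗ₜ[K] ((T (b x_1), 0) : E)))
        = ∑ x : ι, ∑ x_1 : ι, ((0, b.coord x) : E) ⊗ₜ[K] (((0, b.coord x_1) : E) ⊗ₜ[K] ((T ((l (T (b x_1))) (b x)), 0) : E)) :=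
      (Finset.sum_congr rfl fun x _ => key_reindex b T (l (T (b x))) (Φ3 ((0, b.coord x) : E))).trans Finset.sum_comm
    have hL2r : (∑ x : ι, ∑ x_1 : ι, ((0, b.coord x_1 ∘ₗ r (T (b x))) : E) ⊗ₜ[K] (((0, b.coord x) : E) ⊗ₜ[K] ((T (b x_1), 0) : E)))
        = ∑ x : ι, ∑ x_1 : ι, ((0, b.coord x) : E) ⊗ₜ[K] (((0, b.coord x_1) : E) ⊗ₜ[K] ((T ((r (T (b x_1))) (b x)), 0) : E)) :=
      (Finset.sum_congr rfl fun x _ => key_reindex b T (r (T (b x))) (Φ3 ((0, b.coord x) : E))).trans Finset.sum_comm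
    have hL3 : (∑ x : ι, ∑ x_1 : ι, ((0, b.coord x ∘ₗ r (T (b x_1))) : E) ⊗ₜ[K] (((T (b x), 0) : E) ⊗ₜ[K] ((0, b.coord x_1) : E)))
        = ∑ x : ι, ∑ x_1 : ι, ((0, b.coord x) : E) ⊗ₜ[K] (((T ((r (T (b x_1))) (b x)), 0) : E) ⊗ₜ[K] ((0, b.coord x_1) : E)) := by
      rw [Finset.sum_comm]
      conv_rhs => rw [Finset.sum_comm]
      exact Finset.sum_congr rfl fun x1 _ => key_reindex b T (r (T (b x1))) (Φ2 ((0, b.coord x1) : E))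
    have hL4 : (∑ x : ι, ∑ x_1 : ι, ((T (b x), 0) : E) ⊗ₜ[K] (((0, b.coord x ∘ₗ r (T (b x_1))) : E) ⊗ₜ[K] ((0, b.coord x_1) : E)))
        = ∑ x : ι, ∑ x_1 : ι, ((T ((r (T (b x_1))) (b x)), 0) : E) ⊗ₜ[K] (((0, b.coord x) : E) ⊗ₜ[K] ((0, b.coord x_1) : E)) := by
      rw [Finset.sum_comm]
      conv_rhs => rw [Finset.sum_comm]
      exact Finset.sum_congr rfl fun x1 _ => key_reindex b T (r (T (b x1))) (Φ1 ((0, b.coord x1) : E))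
    have hL6r : (∑ x : ι, ∑ x_1 : ι, ((0, b.coord x) : E) ⊗ₜ[K] (((0, b.coord x_1 ∘ₗ r (T (b x))) : E) ⊗ₜ[K] ((T (b x_1), 0) : E)))
        = ∑ x : ι, ∑ x_1 : ι, ((0, b.coord x) : E) ⊗ₜ[K] (((0, b.coord x_1) : E) ⊗ₜ[K] ((T ((r (T (b x))) (b x_1)), 0) : E)) :=
      Finset.sum_congr rfl fun x _ => key_reindex b T (r (T (b x))) (Φ4 ((0, b.coord x) : E))
    have hL6l : (∑ x : ι, ∑ x_1 : ι, ((0, b.coord x) : E) ⊗ₜ[K] (((0, b.coord x_1 ∘ₗ l (T (b x))) : E) ⊗ₜ[K] ((T (b x_1), 0) : E)))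
        = ∑ x : ι, ∑ x_1 : ι, ((0, b.coord x) : E) ⊗ₜ[K] (((0, b.coord x_1) : E) ⊗ₜ[K] ((T ((l (T (b x))) (b x_1)), 0) : E)) :=
      Finset.sum_congr rfl fun x _ => key_reindex b T (l (T (b x))) (Φ4 ((0, b.coord x) : E))
    have hL7 : (∑ x : ι, ∑ x_1 : ι, ((T (b x), 0) : E) ⊗ₜ[K] (((0, b.coord x_1) : E) ⊗ₜ[K] ((0, b.coord x ∘ₗ l (T (b x_1))) : E)))
        = ∑ x : ι, ∑ x_1 : ι, ((T ((l (T (b x))) (b x_1)), 0) : E) ⊗ₜ[K] (((0, b.coord x) : E) ⊗ₜ[K] ((0, b.coord x_1) : E)) := by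
      rw [Finset.sum_comm]
      exact Finset.sum_congr rfl fun x1 _ => key_reindex b T (l (T (b x1))) (Φ6 ((0, b.coord x1) : E))
    have hL8 : (∑ x : ι, ∑ x_1 : ι, ((0, b.coord x) : E) ⊗ₜ[K] (((T (b x_1), 0) : E) ⊗ₜ[K] ((0, b.coord x_1 ∘ₗ l (T (b x))) : E)))
        = ∑ x : ι, ∑ x_1 : ι, ((0, b.coord x) : E) ⊗ₜ[K] (((T ((l (T (b x))) (b x_1)), 0) : E) ⊗ₜ[K] ((0, b.coord x_1) : E)) :=
      Finset.sum_congr rfl fun x _ => key_reindex b T (l (T (b x))) (Φ5 ((0, b.coord x) : E))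
    rw [hL2l, hL2r, hL3, hL4, hL6r, hL6l, hL7, hL8]
    abel
  rw [IsSEquationSolution, hMain]
  constructor
  · intro h
    have hD : ∀ j k, Dmap mul l r T (b j) (b k) = 0 := by
      intro j k
      have h0 := congrArg (extMap (K := K) (b j) (b k)) h
      simp only [map_sum, map_zero, map_add, map_neg, extMap_tmul] at h0
      simpa [Module.Basis.coord_apply, Module.Basis.repr_self, Finsupp.single_apply, ite_smul] using h0
    have hD0 : Dmap mul l r T = 0 := b.ext fun j => b.ext fun k => by
      simp [hD j k]
    intro u v
    have := LinearMap.congr_fun (LinearMap.congr_fun hD0 u) v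
    simp only [Dmap_apply, LinearMap.zero_apply] at this
    rw [map_add, sub_eq_iff_eq_add.mp (sub_eq_zero.mp this)]
    exact add_comm _ _
  · intro h
    have hD : ∀ u v, Dmap mul l r T u v = 0 := by
      intro u v
      simp [Dmap_apply, h u v, map_add]
    simp [hD, Prod.mk_zero_zero]
end Main2


/-- Let `(A,∘)` be a pre-Lie algebra, `(l,r,V)` a module with `V`
finite-dimensional, and `T : V → A` a linear map identified with the element
`Σᵢ T(vᵢ)⊗vᵢ*` of `(A⊕V*)⊗(A⊕V*)`. Then `r = T + σ(T)` is a symmetric solution of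
the S-equation in the semidirect product pre-Lie algebra `A ⋉_{l*−r*, −r*} V*` if
and only if `T` is an O-operator of `(A,∘)` associated to `(l,r,V)`. -/
theorem symmetric_sEquation_solution_iff_OOperator
    {K A V : Type*} [Field K] [CharZero K] [AddCommGroup A] [Module K A]
    [AddCommGroup V] [Module K V] [FiniteDimensional K V]
    (mul : A →ₗ[K] A →ₗ[K] A) (hA : IsPreLie mul)
    (l r : A →ₗ[K] Module.End K V) (hmod : IsPreLieModule mul l r)
    (T : V →ₗ[K] A) :
    (TensorProduct.comm K _ _ (elemOfMap (K := K) T + (TensorProduct.comm K _ _) (elemOfMap (K := K) T))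
        = elemOfMap (K := K) T + (TensorProduct.comm K _ _) (elemOfMap (K := K) T)) ∧
    (IsSEquationSolution (semidirectMul mul l r)
        (elemOfMap (K := K) T + (TensorProduct.comm K _ _) (elemOfMap (K := K) T)) ↔
      IsOOperator mul l r T) := by
  constructor
  · have h1 : ∀ z : (A × Module.Dual K V) ⊗[K] (A × Module.Dual K V),
        (TensorProduct.comm K _ _) ((TensorProduct.comm K _ _) z) = z := fun z => by
      induction z using TensorProduct.induction_on with
      | zero => simp
      | tmul x y => simp [TensorProduct.comm_tmul]
      | add u v hu hv => simp [map_add, hu, hv]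
    rw [map_add, h1, add_comm]
  · exact sEq_iff_OOp (Module.finBasis K V) mul l r T
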